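/- Let η ≥ 0 and let n11, n22, n12, n21 be nonnegative integers. Define L_i = (n_ii − n_ij)⁺ for (i,j) ∈ {(1,2),(2,1)}, and define Ũ_i = n_ii − min(L_j, n_ij) if n_ij ≤ n_ii, and Ũ_i = min((n_ij − L_j)⁺, n_ii) if n_ij > n_ii. Then for each i, L_i ≤ Ũ_i. -/
import Mathlib

lemma ldic_half (a b c d : ℕ) :
    max ((a : ℝ) - b) 0 ≤
      (if b ≤ a then (a : ℝ) - min (max ((c : ℝ) - d) 0) (b : ℝ)
       else min (max ((b : ℝ) - max ((c : ℝ) - d) 0) 0) (a : ℝ)) := by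
  split
  · next h =>
    have hb : (b : ℝ) ≤ a := by exact_mod_cast h
    rcases max_cases ((a : ℝ) - b) 0 with ⟨he, _⟩ | ⟨he, _⟩ <;> rw [he]
    · have := min_le_right (max ((c : ℝ) - d) 0) (b : ℝ)
      linarith
    · have h1 : min (max ((c : ℝ) - d) 0) (b : ℝ) ≤ b := min_le_right _ _
      linarith
  · next h =>
    have hb : (a : ℝ) < b := by exact_mod_cast Nat.lt_of_not_le h
    have he : max ((a : ℝ) - b) 0 = 0 := max_eq_right (by linarith)
    rw [he]
    exact le_min (le_max_right _ _) (Nat.cast_nonneg a)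

/-- The box B_LDIC is nonempty: L_i ≤ Ũ_i for i = 1, 2. -/
theorem ldic_box_nonempty (η : ℝ) (hη : 0 ≤ η) (n11 n22 n12 n21 : ℕ) :
    (max ((n11 : ℝ) - n12) 0 ≤
      (if n12 ≤ n11 then (n11 : ℝ) - min (max ((n22 : ℝ) - n21) 0) (n12 : ℝ)
       else min (max ((n12 : ℝ) - max ((n22 : ℝ) - n21) 0) 0) (n11 : ℝ))) ∧
    (max ((n22 : ℝ) - n21) 0 ≤
      (if n21 ≤ n22 then (n22 : ℝ) - min (max ((n11 : ℝ) - n12) 0) (n21 : ℝ)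
       else min (max ((n21 : ℝ) - max ((n11 : ℝ) - n12) 0) 0) (n22 : ℝ))) :=
  ⟨ldic_half n11 n12 n22 n21, ldic_half n22 n21 n11 n12⟩
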